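/- For every integer k ≥ 2 and every integer n with 1 ≤ n ≤ k, Q_n^{(k)} = 2 F_{2n}, where F denotes the Fibonacci sequence. -/

import Mathlib

lemma fib_three_term (m : ℕ) : Nat.fib (m + 4) + Nat.fib m = 3 * Nat.fib (m + 2) := by
  have h1 := Nat.fib_add_two (n := m + 2)
  have h2 := Nat.fib_add_two (n := m + 1)
  have h3 := Nat.fib_add_two (n := m)
  simp only [show m + 2 + 2 = m + 4 by omega, show m + 2 + 1 = m + 3 by omega,
    show m + 1 + 2 = m + 3 by omega, show m + 1 + 1 = m + 2 by omega] at h1 h2 h3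
  omega

/-- For every integer k ≥ 2 and every integer n with 1 ≤ n ≤ k,
`Q_n^{(k)} = 2 F_{2n}` where F denotes the Fibonacci sequence. -/
theorem pellLucas_eq_two_mul_fib (k : ℕ) (hk : 2 ≤ k)
    (Q : ℤ → ℤ)
    (hQinit : ∀ n : ℤ, 2 - (k : ℤ) ≤ n → n ≤ -1 → Q n = 0)
    (hQ0 : Q 0 = 2) (hQ1 : Q 1 = 2)
    (hQrec : ∀ n : ℤ, 2 ≤ n →
      Q n = 2 * Q (n - 1) + ∑ i ∈ Finset.Icc 2 k, Q (n - (i : ℤ))) :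
    ∀ n : ℕ, 1 ≤ n → n ≤ k → Q (n : ℤ) = 2 * Nat.fib (2 * n) := by
  have hk' : (2 : ℤ) ≤ (k : ℤ) := by exact_mod_cast hk
  -- three-term recurrence for 3 ≤ n ≤ k
  have key : ∀ n : ℤ, 3 ≤ n → n ≤ (k : ℤ) → Q n = 3 * Q (n - 1) - Q (n - 2) := by
    intro n h3 hnk
    have r1 := hQrec n (by omega)
    have r2 := hQrec (n - 1) (by omega)
    have e : n - 1 - 1 = n - 2 := by ring
    rw [e] at r2
    have hshift : ∑ i ∈ Finset.Icc 3 (k + 1), Q (n - (i : ℤ))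
        = ∑ i ∈ Finset.Icc 2 k, Q (n - 1 - (i : ℤ)) := by
      have hmap : (Finset.Icc 2 k).map (addRightEmbedding 1) = Finset.Icc 3 (k + 1) := by
        rw [Finset.map_add_right_Icc]
      rw [← hmap, Finset.sum_map]
      refine Finset.sum_congr rfl fun i _ => ?_
      congr 1
      simp [addRightEmbedding]
      push_cast
      ring
    have hins1 : insert 2 (Finset.Icc 3 k) = Finset.Icc 2 k :=
      Finset.insert_Icc_succ_left_eq_Icc hk
    have hsplit1 : ∑ i ∈ Finset.Icc 2 k, Q (n - (i : ℤ))
        = Q (n - 2) + ∑ i ∈ Finset.Icc 3 k, Q (n - (i : ℤ)) := by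
      rw [← hins1, Finset.sum_insert (by simp)]
      norm_num
    have hins2 : Finset.Icc 3 (k + 1) = insert (k + 1) (Finset.Icc 3 k) := by
      ext x; simp [Finset.mem_Icc, Finset.mem_insert]; omega
    have hzero : Q (n - ((k : ℤ) + 1)) = 0 :=
      hQinit _ (by omega) (by omega)
    have hsplit2 : ∑ i ∈ Finset.Icc 3 (k + 1), Q (n - (i : ℤ))
        = Q (n - ((k : ℤ) + 1)) + ∑ i ∈ Finset.Icc 3 k, Q (n - (i : ℤ)) := by
      rw [hins2, Finset.sum_insert (by simp)]
      push_cast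
      ring_nf
    rw [hsplit1] at r1
    rw [← hshift, hsplit2, hzero] at r2
    linarith
  intro n
  induction n using Nat.strong_induction_on with
  | _ n ih =>
    intro h1 hnk
    match n, h1, hnk with
    | 1, _, _ =>
      norm_num [hQ1]
    | 2, _, h2k =>
      have r := hQrec 2 (by omega)
      have hins1 : insert 2 (Finset.Icc 3 k) = Finset.Icc 2 k :=
        Finset.insert_Icc_succ_left_eq_Icc hk
      have hz : ∑ i ∈ Finset.Icc 3 k, Q (2 - (i : ℤ)) = 0 := by
        refine Finset.sum_eq_zero fun i hi => ?_
        simp only [Finset.mem_Icc] at hi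
        exact hQinit _ (by omega) (by omega)
      rw [← hins1, Finset.sum_insert (by simp), hz] at r
      norm_num at r
      rw [hQ1, hQ0] at r
      push_cast
      norm_num [r, show Nat.fib 4 = 3 from rfl]
    | (m + 3), _, hmk =>
      have h1' : Q ((m + 2 : ℕ) : ℤ) = 2 * Nat.fib (2 * (m + 2)) :=
        ih (m + 2) (by omega) (by omega) (by omega)
      have h2' : Q ((m + 1 : ℕ) : ℤ) = 2 * Nat.fib (2 * (m + 1)) :=
        ih (m + 1) (by omega) (by omega) (by omega)
      have hkey := key ((m + 3 : ℕ) : ℤ) (by push_cast; omega) (by exact_mod_cast hmk)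
      have e1 : ((m + 3 : ℕ) : ℤ) - 1 = ((m + 2 : ℕ) : ℤ) := by push_cast; ring
      have e2 : ((m + 3 : ℕ) : ℤ) - 2 = ((m + 1 : ℕ) : ℤ) := by push_cast; ring
      rw [e1, e2, h1', h2'] at hkey
      have hf := fib_three_term (2 * (m + 1))
      rw [hkey]
      have e3 : 2 * (m + 1) + 4 = 2 * (m + 3) := by ring
      have e4 : 2 * (m + 1) + 2 = 2 * (m + 2) := by ring
      rw [e3, e4] at hf
      push_cast
      push_cast at hf
      linarith
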